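/- For every n ≥ 1, the bivariate exterior peak polynomials satisfy the convolution formula W_{n+1}(x,y) = Σ_{k=0}^{n} C(n,k)·W_k(x,y)·W_{n−k}(x,y), where C(n,k) is the binomial coefficient. -/

import Mathlib

open MvPolynomial

/-- The `i`-th entry (1-indexed) of the permutation `σ` of `[n]`, with the
convention that positions `0` and `> n` carry the entry `0`. -/
def permEntry (n : ℕ) (σ : Equiv.Perm (Fin n)) (i : ℕ) : ℕ :=
  if h : 1 ≤ i ∧ i ≤ n then ((σ ⟨i - 1, by omega⟩ : Fin n) : ℕ) + 1 else 0

/-- The number of left peaks of `σ`: indices `1 ≤ i ≤ n-1` with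
`σ_{i-1} < σ_i > σ_{i+1}`, convention `σ₀ = 0`. -/
def leftPeakCount (n : ℕ) (σ : Equiv.Perm (Fin n)) : ℕ :=
  ((Finset.Icc 1 (n - 1)).filter fun i =>
    permEntry n σ (i - 1) < permEntry n σ i ∧ permEntry n σ (i + 1) < permEntry n σ i).card

/-- The number of exterior peaks of `σ`: indices `1 ≤ i ≤ n` with
`σ_{i-1} < σ_i > σ_{i+1}`, conventions `σ₀ = σ_{n+1} = 0`. -/
def extPeakCount (n : ℕ) (σ : Equiv.Perm (Fin n)) : ℕ :=
  ((Finset.Icc 1 n).filter fun i =>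
    permEntry n σ (i - 1) < permEntry n σ i ∧ permEntry n σ (i + 1) < permEntry n σ i).card

/-- The number of interior peaks of `σ`: indices `2 ≤ i ≤ n-1` with
`σ_{i-1} < σ_i > σ_{i+1}`. -/
def intPeakCount (n : ℕ) (σ : Equiv.Perm (Fin n)) : ℕ :=
  ((Finset.Icc 2 (n - 1)).filter fun i =>
    permEntry n σ (i - 1) < permEntry n σ i ∧ permEntry n σ (i + 1) < permEntry n σ i).card

/-- The number of up-down runs of `σ`: maximal monotone segments of the
extended sequence `0, σ₁, …, σₙ`, i.e. one more than the number of direction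
changes of that sequence (and `0` for `n = 0`). -/
def udRunCount (n : ℕ) (σ : Equiv.Perm (Fin n)) : ℕ :=
  if n = 0 then 0 else
    1 + ((Finset.Icc 1 (n - 1)).filter fun i =>
      (permEntry n σ (i - 1) < permEntry n σ i ∧ permEntry n σ (i + 1) < permEntry n σ i) ∨
      (permEntry n σ i < permEntry n σ (i - 1) ∧ permEntry n σ i < permEntry n σ (i + 1))).card

/-- The number of alternating runs of `σ`: maximal monotone segments of
`σ₁, …, σₙ`, i.e. one more than the number of direction changes (and `0` for `n = 0`). -/
def altRunCount (n : ℕ) (σ : Equiv.Perm (Fin n)) : ℕ :=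
  if n = 0 then 0 else
    1 + ((Finset.Icc 2 (n - 1)).filter fun i =>
      (permEntry n σ (i - 1) < permEntry n σ i ∧ permEntry n σ (i + 1) < permEntry n σ i) ∨
      (permEntry n σ i < permEntry n σ (i - 1) ∧ permEntry n σ i < permEntry n σ (i + 1))).card

/-- `L n k` : the number of permutations of `[n]` with exactly `k` left peaks. -/
def leftPeakNum (n k : ℕ) : ℕ :=
  (Finset.univ.filter fun σ : Equiv.Perm (Fin n) => leftPeakCount n σ = k).card

/-- `W n k` : the number of permutations of `[n]` with exactly `k` exterior peaks. -/
def extPeakNum (n k : ℕ) : ℕ :=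
  (Finset.univ.filter fun σ : Equiv.Perm (Fin n) => extPeakCount n σ = k).card

/-- `M n k` : the number of permutations of `[n]` with exactly `k` interior peaks. -/
def intPeakNum (n k : ℕ) : ℕ :=
  (Finset.univ.filter fun σ : Equiv.Perm (Fin n) => intPeakCount n σ = k).card

/-- `Λ n k` : the number of permutations of `[n]` with exactly `k` up-down runs. -/
def udRunNum (n k : ℕ) : ℕ :=
  (Finset.univ.filter fun σ : Equiv.Perm (Fin n) => udRunCount n σ = k).card

/-- `R n k` : the number of permutations of `[n]` with exactly `k` alternating runs. -/
def altRunNum (n k : ℕ) : ℕ :=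
  (Finset.univ.filter fun σ : Equiv.Perm (Fin n) => altRunCount n σ = k).card

/-- The bivariate exterior peak polynomial
`W_n(x,y) = Σ_{k=1}^{⌊(n+1)/2⌋} W(n,k)·x^{2k}·y^{n−2k+1}`, with `W_0(x,y) = y`. -/
noncomputable def Wb (n : ℕ) : MvPolynomial (Fin 2) ℚ :=
  if n = 0 then X 1 else
    ∑ k ∈ Finset.Icc 1 ((n + 1) / 2),
      (extPeakNum n k : MvPolynomial (Fin 2) ℚ) * X 0 ^ (2 * k) * X 1 ^ (n + 1 - 2 * k)

def ins (n : ℕ) (σ : Equiv.Perm (Fin n)) (p : Fin (n + 1)) : Equiv.Perm (Fin (n + 1)) :=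
  (finSuccEquiv' p).trans ((Equiv.optionCongr σ).trans (finSuccEquiv' (Fin.last n)).symm)

lemma ins_self (n σ p) : ins n σ p p = Fin.last n := by
  simp [ins, finSuccEquiv'_at]

lemma ins_succAbove (n σ p) (j : Fin n) :
    ins n σ p (p.succAbove j) = (σ j).castSucc := by
  simp [ins, finSuccEquiv'_succAbove,
    finSuccEquiv'_symm_some_below (Fin.castSucc_lt_last _)]

lemma permEntry_ins (n : ℕ) (σ : Equiv.Perm (Fin n)) (p : Fin (n + 1)) (i : ℕ) :
    permEntry (n + 1) (ins n σ p) i =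
      if i < (p : ℕ) + 1 then permEntry n σ i
      else if i = (p : ℕ) + 1 then n + 1
      else permEntry n σ (i - 1) := by
  have hp : (p : ℕ) < n + 1 := p.isLt
  by_cases h : 1 ≤ i ∧ i ≤ n + 1
  · rw [permEntry, dif_pos h]
    rcases Nat.lt_trichotomy (i - 1) (p : ℕ) with hc | hc | hc
    · have hj : i - 1 < n := by omega
      have : (⟨i - 1, by omega⟩ : Fin (n + 1)) = p.succAbove ⟨i - 1, hj⟩ := by
        rw [Fin.succAbove_of_castSucc_lt]
        · rfl
        · simpa [Fin.lt_def] using hc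
      rw [this, ins_succAbove]
      rw [if_pos (by omega), permEntry, dif_pos (by omega)]
      rfl
    · have : (⟨i - 1, by omega⟩ : Fin (n + 1)) = p := by
        apply Fin.ext; simpa using hc
      rw [this, ins_self, if_neg (by omega), if_pos (by omega)]
      simp [Fin.last]
    · have h2 : 2 ≤ i := by omega
      have hj : i - 2 < n := by omega
      have : (⟨i - 1, by omega⟩ : Fin (n + 1)) = p.succAbove ⟨i - 2, hj⟩ := by
        rw [Fin.succAbove_of_le_castSucc]
        · apply Fin.ext; simp [Fin.succ]; omega
        · simp [Fin.le_def]; omega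
      rw [this, ins_succAbove]
      rw [if_neg (by omega), if_neg (by omega), permEntry, dif_pos (by omega)]
      have : i - 1 - 1 = i - 2 := by omega
      simp [this]
  · rw [permEntry, dif_neg h]
    rcases Nat.eq_zero_or_pos i with rfl | hi
    · rw [if_pos (by omega), permEntry, dif_neg (by omega)]
    · rw [if_neg (by omega), if_neg (by omega), permEntry, dif_neg (by omega)]

lemma permEntry_le (n : ℕ) (σ : Equiv.Perm (Fin n)) (i : ℕ) : permEntry n σ i ≤ n := by
  rw [permEntry]
  split
  · exact (σ _).isLt
  · omega

/-- The peak set of `σ`. -/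
def Pk (n : ℕ) (σ : Equiv.Perm (Fin n)) : Finset ℕ :=
  (Finset.Icc 1 n).filter fun i =>
    permEntry n σ (i - 1) < permEntry n σ i ∧ permEntry n σ (i + 1) < permEntry n σ i

lemma extPeakCount_eq (n σ) : extPeakCount n σ = (Pk n σ).card := rfl

lemma no_adjacent (n : ℕ) (σ : Equiv.Perm (Fin n)) (i : ℕ)
    (h : i ∈ Pk n σ) (h' : i + 1 ∈ Pk n σ) : False := by
  rw [Pk, Finset.mem_filter] at h h'
  have := h.2.2
  have := h'.2.1
  simp only [Nat.add_sub_cancel] at *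
  omega

lemma peaks_ins (n : ℕ) (σ : Equiv.Perm (Fin n)) (p : Fin (n + 1)) :
    Pk (n + 1) (ins n σ p)
      = insert ((p : ℕ) + 1)
          (((Pk n σ).filter (· < (p : ℕ))) ∪
            (((Pk n σ).filter fun j => (p : ℕ) + 1 < j).image (· + 1))) := by
  have hp : (p : ℕ) < n + 1 := p.isLt
  have hE : ∀ j, permEntry n σ j ≤ n := permEntry_le n σ
  set F := permEntry (n + 1) (ins n σ p) with hF
  have hFlt : ∀ x, x < (p : ℕ) + 1 → F x = permEntry n σ x := by
    intro x hx; rw [hF, permEntry_ins, if_pos hx]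
  have hFeq : F ((p : ℕ) + 1) = n + 1 := by
    rw [hF, permEntry_ins, if_neg (by omega), if_pos rfl]
  have hFgt : ∀ x, (p : ℕ) + 1 < x → F x = permEntry n σ (x - 1) := by
    intro x hx; rw [hF, permEntry_ins, if_neg (by omega), if_neg (by omega)]
  ext i
  simp only [Pk, Finset.mem_insert, Finset.mem_union, Finset.mem_filter, Finset.mem_image,
    Finset.mem_Icc, ← hF]
  by_cases h1 : i = (p : ℕ) + 1
  · subst h1
    apply iff_of_true _ (Or.inl rfl)
    refine ⟨⟨by omega, by omega⟩, ?_, ?_⟩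
    · rw [hFeq, hFlt _ (by omega)]
      have := hE ((p : ℕ) + 1 - 1); omega
    · rw [hFeq, hFgt _ (by omega)]
      have := hE ((p : ℕ) + 1 + 1 - 1); omega
  by_cases h2 : i < (p : ℕ) + 1
  · -- i ≤ p
    by_cases h3 : i + 1 = (p : ℕ) + 1
    · -- i = p : killed by the new max on the right
      apply iff_of_false
      · rintro ⟨-, -, hR⟩
        rw [h3, hFeq, hFlt _ h2] at hR
        have := hE i; omega
      · rintro (h | ⟨-, hlt⟩ | ⟨a, ⟨-, hlt⟩, ha⟩) <;> omega
    · -- i < p : survives in place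
      have h4 : i + 1 < (p : ℕ) + 1 := by omega
      rw [hFlt _ (by omega), hFlt _ h2, hFlt _ h4]
      constructor
      · rintro ⟨⟨hi1, hi2⟩, hL, hR⟩
        exact Or.inr (Or.inl ⟨⟨⟨by omega, by omega⟩, hL, hR⟩, by omega⟩)
      · rintro (h | ⟨⟨⟨a1, a2⟩, hL, hR⟩, hlt⟩ | ⟨a, ⟨-, hlt⟩, ha⟩)
        · omega
        · exact ⟨⟨a1, by omega⟩, hL, hR⟩
        · omega
  · -- i > p + 1
    by_cases h3 : i = (p : ℕ) + 2
    · -- i = p + 2 : killed by the new max on the left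
      apply iff_of_false
      · rintro ⟨-, hL, -⟩
        rw [show i - 1 = (p : ℕ) + 1 from by omega, hFeq, hFgt _ (by omega)] at hL
        have := hE (i - 1); omega
      · rintro (h | ⟨-, hlt⟩ | ⟨a, ⟨-, hlt⟩, ha⟩) <;> omega
    · -- i ≥ p + 3 : shifted peak
      have h5 : (p : ℕ) + 1 < i - 1 := by omega
      rw [hFgt (i - 1) h5, hFgt i (by omega), hFgt (i + 1) (by omega)]
      constructor
      · rintro ⟨⟨hi1, hi2⟩, hL, hR⟩
        refine Or.inr (Or.inr ⟨i - 1, ⟨⟨⟨by omega, by omega⟩, ?_, ?_⟩, by omega⟩, by omega⟩)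
        · exact hL
        · rw [show i - 1 + 1 = i + 1 - 1 from by omega]; exact hR
      · rintro (h | ⟨-, hlt⟩ | ⟨a, ⟨⟨⟨a1, a2⟩, hL, hR⟩, hlt⟩, ha⟩)
        · omega
        · omega
        · obtain rfl : i = a + 1 := by omega
          refine ⟨⟨by omega, by omega⟩, ?_, ?_⟩
          · rw [show a + 1 - 1 - 1 = a - 1 from by omega, show a + 1 - 1 = a from by omega]
            exact hL
          · rw [show a + 1 + 1 - 1 = a + 1 from by omega, show a + 1 - 1 = a from by omega]
            exact hR

lemma count_ins (n : ℕ) (σ : Equiv.Perm (Fin n)) (p : Fin (n + 1)) :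
    extPeakCount (n + 1) (ins n σ p)
      = extPeakCount n σ + 1
        - (if (p : ℕ) ∈ Pk n σ ∨ (p : ℕ) + 1 ∈ Pk n σ then 1 else 0) := by
  classical
  have hins : extPeakCount (n + 1) (ins n σ p)
      = 1 + ((Pk n σ).filter (· < (p : ℕ))).card
          + ((Pk n σ).filter fun j => (p : ℕ) + 1 < j).card := by
    rw [extPeakCount_eq, peaks_ins, Finset.card_insert_of_notMem, Finset.card_union_of_disjoint,
      Finset.card_image_of_injective _ (add_left_injective 1)]
    · omega
    · rw [Finset.disjoint_left]
      intro a ha hb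
      rw [Finset.mem_filter] at ha
      simp only [Finset.mem_image, Finset.mem_filter] at hb
      obtain ⟨j, ⟨-, hj⟩, rfl⟩ := hb
      omega
    · simp only [Finset.mem_union, Finset.mem_filter, Finset.mem_image, not_or]
      constructor
      · rintro ⟨-, h⟩; omega
      · rintro ⟨j, ⟨-, hj⟩, hj'⟩; omega
  have hsplit : ((Pk n σ).filter (· < (p : ℕ))).card
      + ((Pk n σ).filter fun j => (p : ℕ) + 1 < j).card
      + ((Pk n σ).filter fun j => j = (p : ℕ) ∨ j = (p : ℕ) + 1).card = (Pk n σ).card := by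
    have h1 := Finset.card_filter_add_card_filter_not (s := Pk n σ)
      (p := fun j => j < (p : ℕ))
    have h2 := Finset.card_filter_add_card_filter_not
      (s := (Pk n σ).filter fun j => ¬ j < (p : ℕ)) (p := fun j => (p : ℕ) + 1 < j)
    rw [Finset.filter_filter, Finset.filter_filter] at h2
    have e1 : (Pk n σ).filter (fun j => ¬ j < (p : ℕ) ∧ (p : ℕ) + 1 < j)
        = (Pk n σ).filter fun j => (p : ℕ) + 1 < j :=
      Finset.filter_congr fun j _ => by constructor <;> intro h <;> omega
    have e2 : (Pk n σ).filter (fun j => ¬ j < (p : ℕ) ∧ ¬ (p : ℕ) + 1 < j)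
        = (Pk n σ).filter fun j => j = (p : ℕ) ∨ j = (p : ℕ) + 1 :=
      Finset.filter_congr fun j _ => by constructor <;> intro h <;> omega
    rw [e1, e2] at h2
    omega
  have hmid : ((Pk n σ).filter fun j => j = (p : ℕ) ∨ j = (p : ℕ) + 1).card
      = (if (p : ℕ) ∈ Pk n σ ∨ (p : ℕ) + 1 ∈ Pk n σ then 1 else 0) := by
    by_cases hp0 : (p : ℕ) ∈ Pk n σ <;> by_cases hp1 : (p : ℕ) + 1 ∈ Pk n σ
    · exact absurd (no_adjacent n σ _ hp0 hp1) (by simp)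
    · rw [if_pos (Or.inl hp0)]
      rw [show ((Pk n σ).filter fun j => j = (p : ℕ) ∨ j = (p : ℕ) + 1) = {(p : ℕ)} from ?_,
        Finset.card_singleton]
      ext j
      simp only [Finset.mem_filter, Finset.mem_singleton]
      constructor
      · rintro ⟨hj, rfl | rfl⟩
        · rfl
        · exact absurd hj hp1
      · rintro rfl; exact ⟨hp0, Or.inl rfl⟩
    · rw [if_pos (Or.inr hp1)]
      rw [show ((Pk n σ).filter fun j => j = (p : ℕ) ∨ j = (p : ℕ) + 1) = {(p : ℕ) + 1} from ?_,
        Finset.card_singleton]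
      ext j
      simp only [Finset.mem_filter, Finset.mem_singleton]
      constructor
      · rintro ⟨hj, rfl | rfl⟩
        · exact absurd hj hp0
        · rfl
      · rintro rfl; exact ⟨hp1, Or.inr rfl⟩
    · rw [if_neg (by tauto), Finset.card_eq_zero, Finset.filter_eq_empty_iff]
      rintro j hj (rfl | rfl)
      · exact hp0 hj
      · exact hp1 hj
  rw [extPeakCount_eq n σ, ← hmid]
  omega

lemma slots (n : ℕ) (σ : Equiv.Perm (Fin n)) :
    ((Finset.univ : Finset (Fin (n + 1))).filter fun p : Fin (n + 1) =>
        (p : ℕ) ∈ Pk n σ ∨ (p : ℕ) + 1 ∈ Pk n σ).card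
      = 2 * extPeakCount n σ := by
  classical
  have hPk : ∀ j ∈ Pk n σ, 1 ≤ j ∧ j ≤ n := by
    intro j hj
    rw [Pk, Finset.mem_filter, Finset.mem_Icc] at hj
    exact hj.1
  have hcard : ((Finset.univ : Finset (Fin (n + 1))).filter fun p : Fin (n + 1) =>
        (p : ℕ) ∈ Pk n σ ∨ (p : ℕ) + 1 ∈ Pk n σ).card
      = (Pk n σ ∪ (Pk n σ).image (· - 1)).card := by
    apply Finset.card_bij (fun (p : Fin (n + 1)) _ => (p : ℕ))
    · intro p hp
      rw [Finset.mem_filter] at hp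
      rw [Finset.mem_union]
      rcases hp.2 with h | h
      · exact Or.inl h
      · refine Or.inr (Finset.mem_image.mpr ⟨(p : ℕ) + 1, h, by omega⟩)
    · intro p _ q _ h
      exact Fin.ext h
    · intro t ht
      rw [Finset.mem_union] at ht
      rcases ht with h | h
      · have := hPk t h
        exact ⟨⟨t, by omega⟩, Finset.mem_filter.mpr ⟨Finset.mem_univ _, Or.inl h⟩, rfl⟩
      · obtain ⟨j, hj, rfl⟩ := Finset.mem_image.mp h
        have := hPk j hj
        refine ⟨⟨j - 1, by omega⟩, Finset.mem_filter.mpr ⟨Finset.mem_univ _, Or.inr ?_⟩, rfl⟩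
        simpa [show j - 1 + 1 = j from by omega] using hj
  rw [hcard, Finset.card_union_of_disjoint, Finset.card_image_of_injOn, extPeakCount_eq]
  · omega
  · intro a ha b hb hab
    simp only at hab
    have := hPk a ha; have := hPk b hb
    omega
  · rw [Finset.disjoint_left]
    intro t ht htim
    obtain ⟨j, hj, rfl⟩ := Finset.mem_image.mp htim
    have := hPk j hj
    exact no_adjacent n σ (j - 1) ht (by simpa [show j - 1 + 1 = j from by omega] using hj)

lemma two_mul_le (n : ℕ) (σ : Equiv.Perm (Fin n)) : 2 * extPeakCount n σ ≤ n + 1 := by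
  rw [← slots n σ]
  calc _ ≤ (Finset.univ : Finset (Fin (n + 1))).card := Finset.card_filter_le _ _
    _ = n + 1 := by simp

lemma extPeakNum_vanish (n k : ℕ) (h : n + 1 < 2 * k) : extPeakNum n k = 0 := by
  rw [extPeakNum, Finset.card_eq_zero, Finset.filter_eq_empty_iff]
  intro σ _ hσ
  have := two_mul_le n σ
  omega

lemma permEntry_lt_of_ne (n : ℕ) (σ : Equiv.Perm (Fin n)) (hn : 1 ≤ n) (j : ℕ)
    (hj : j ≠ ((σ.symm ⟨n - 1, by omega⟩ : Fin n) : ℕ) + 1) : permEntry n σ j < n := by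
  rw [permEntry]
  split
  · next h =>
    have hne : σ ⟨j - 1, by omega⟩ ≠ ⟨n - 1, by omega⟩ := by
      intro he
      apply hj
      have : (⟨j - 1, by omega⟩ : Fin n) = σ.symm ⟨n - 1, by omega⟩ := by
        rw [← he, Equiv.symm_apply_apply]
      have := congrArg Fin.val this
      simp at this
      omega
    have h1 : ((σ ⟨j - 1, by omega⟩ : Fin n) : ℕ) < n := (σ _).isLt
    have h2 : ((σ ⟨j - 1, by omega⟩ : Fin n) : ℕ) ≠ n - 1 := fun hv => hne (Fin.ext (by simpa using hv))
    omega
  · omega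

lemma peak_at_max (n : ℕ) (σ : Equiv.Perm (Fin n)) (hn : 1 ≤ n) :
    ((σ.symm ⟨n - 1, by omega⟩ : Fin n) : ℕ) + 1 ∈ Pk n σ := by
  set i₀ := ((σ.symm ⟨n - 1, by omega⟩ : Fin n) : ℕ) with hi₀
  have hlt : i₀ < n := (σ.symm _).isLt
  have hmax : permEntry n σ (i₀ + 1) = n := by
    rw [permEntry, dif_pos (by omega)]
    have : (⟨i₀ + 1 - 1, by omega⟩ : Fin n) = σ.symm ⟨n - 1, by omega⟩ := Fin.ext (by simp [hi₀])
    rw [this, Equiv.apply_symm_apply]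
    simp
    omega
  rw [Pk, Finset.mem_filter, Finset.mem_Icc]
  refine ⟨⟨by omega, by omega⟩, ?_, ?_⟩
  · rw [show i₀ + 1 - 1 = i₀ from by omega, hmax]
    exact permEntry_lt_of_ne n σ hn i₀ (by omega)
  · rw [hmax]
    exact permEntry_lt_of_ne n σ hn (i₀ + 1 + 1) (by omega)

lemma extPeakCount_pos (n : ℕ) (σ : Equiv.Perm (Fin n)) (hn : 1 ≤ n) :
    1 ≤ extPeakCount n σ := by
  rw [extPeakCount_eq]
  exact Finset.card_pos.mpr ⟨_, peak_at_max n σ hn⟩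

lemma extPeakNum_zero (n : ℕ) (hn : 1 ≤ n) : extPeakNum n 0 = 0 := by
  rw [extPeakNum, Finset.card_eq_zero, Finset.filter_eq_empty_iff]
  intro σ _ hσ
  have := extPeakCount_pos n σ hn
  omega

lemma ins_bijective (n : ℕ) :
    Function.Bijective (fun x : Equiv.Perm (Fin n) × Fin (n + 1) => ins n x.1 x.2) := by
  rw [Fintype.bijective_iff_injective_and_card]
  constructor
  · rintro ⟨σ, p⟩ ⟨σ', p'⟩ h
    simp only at h
    have hp : p = p' := by
      have h1 : ins n σ' p' p = Fin.last n := by rw [← h, ins_self]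
      have h2 : ins n σ' p' p' = Fin.last n := ins_self n σ' p'
      exact (ins n σ' p').injective (h1.trans h2.symm)
    subst hp
    have hσ : σ = σ' := by
      apply Equiv.ext
      intro j
      have h1 : ins n σ p (p.succAbove j) = (σ j).castSucc := ins_succAbove n σ p j
      have h2 : ins n σ' p (p.succAbove j) = (σ' j).castSucc := ins_succAbove n σ' p j
      rw [h] at h1
      have := h1.symm.trans h2
      exact Fin.castSucc_inj.mp this
    rw [hσ]
  · simp [Fintype.card_perm, Nat.factorial_succ]
    ring

lemma inner_count (n k : ℕ) (σ : Equiv.Perm (Fin n)) (hk : 1 ≤ k) :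
    ∑ p : Fin (n + 1), (if extPeakCount (n + 1) (ins n σ p) = k then 1 else 0)
      = (if extPeakCount n σ = k then 2 * k else 0)
        + (if extPeakCount n σ = k - 1 then n + 3 - 2 * k else 0) := by
  classical
  have hb := two_mul_le n σ
  set c := extPeakCount n σ with hc
  by_cases h1 : c = k
  · rw [if_pos h1, if_neg (by omega), add_zero]
    have key : ∀ p : Fin (n + 1),
        (if extPeakCount (n + 1) (ins n σ p) = k then (1 : ℕ) else 0)
        = (if ((p : ℕ) ∈ Pk n σ ∨ (p : ℕ) + 1 ∈ Pk n σ) then 1 else 0) := by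
      intro p
      rw [count_ins]
      by_cases hχ : ((p : ℕ) ∈ Pk n σ ∨ (p : ℕ) + 1 ∈ Pk n σ)
      · rw [if_pos hχ, if_pos (show extPeakCount n σ + 1 - 1 = k from by omega)]
      · rw [if_neg hχ, if_neg (show ¬(extPeakCount n σ + 1 - 0 = k) from by omega)]
    rw [Finset.sum_congr rfl fun p _ => key p, ← Finset.card_filter, slots, ← hc, h1]
  · by_cases h2 : c = k - 1
    · rw [if_neg h1, if_pos h2, zero_add]
      have key : ∀ p : Fin (n + 1),
          (if extPeakCount (n + 1) (ins n σ p) = k then (1 : ℕ) else 0)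
          = (if ¬((p : ℕ) ∈ Pk n σ ∨ (p : ℕ) + 1 ∈ Pk n σ) then 1 else 0) := by
        intro p
        rw [count_ins]
        by_cases hχ : ((p : ℕ) ∈ Pk n σ ∨ (p : ℕ) + 1 ∈ Pk n σ)
        · rw [if_pos hχ, if_neg (not_not_intro hχ),
            if_neg (show ¬(extPeakCount n σ + 1 - 1 = k) from by omega)]
        · rw [if_neg hχ, if_pos hχ,
            if_pos (show extPeakCount n σ + 1 - 0 = k from by omega)]
      rw [Finset.sum_congr rfl fun p _ => key p, ← Finset.card_filter]
      have := Finset.card_filter_add_card_filter_not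
        (s := (Finset.univ : Finset (Fin (n + 1))))
        (p := fun p : Fin (n + 1) => (p : ℕ) ∈ Pk n σ ∨ (p : ℕ) + 1 ∈ Pk n σ)
      rw [slots, ← hc] at this
      have hcard : (Finset.univ : Finset (Fin (n + 1))).card = n + 1 := by simp
      omega
    · rw [if_neg h1, if_neg h2, add_zero]
      apply Finset.sum_eq_zero
      intro p _
      rw [count_ins, if_neg]
      rw [← hc]
      by_cases hχ : ((p : ℕ) ∈ Pk n σ ∨ (p : ℕ) + 1 ∈ Pk n σ)
      · rw [if_pos hχ]; omega
      · rw [if_neg hχ]; omega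

lemma sum_indicator (n : ℕ) (C k : ℕ) :
    ∑ σ : Equiv.Perm (Fin n), (if extPeakCount n σ = k then C else 0)
      = C * extPeakNum n k := by
  classical
  rw [Finset.sum_ite, Finset.sum_const, Finset.sum_const_zero, add_zero, extPeakNum,
    smul_eq_mul, mul_comm]

lemma extPeakNum_rec (n k : ℕ) (hn : 1 ≤ n) (hk : 1 ≤ k) :
    extPeakNum (n + 1) k = 2 * k * extPeakNum n k + (n + 3 - 2 * k) * extPeakNum n (k - 1) := by
  classical
  rw [extPeakNum, Finset.card_filter]
  rw [← Fintype.sum_bijective _ (ins_bijective n)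
    (fun x : Equiv.Perm (Fin n) × Fin (n + 1) =>
      if extPeakCount (n + 1) (ins n x.1 x.2) = k then (1 : ℕ) else 0)
    _ (fun x => rfl)]
  rw [Fintype.sum_prod_type]
  rw [Finset.sum_congr rfl fun σ _ => inner_count n k σ hk]
  rw [Finset.sum_add_distrib, sum_indicator, sum_indicator]

lemma extPeakNum_one : extPeakNum 1 1 = 1 := by decide

abbrev P2 := MvPolynomial (Fin 2) ℚ

-- combinatorial facts (to be proven)

noncomputable def Dd : Derivation ℚ P2 P2 :=
  MvPolynomial.mkDerivation ℚ ![(X 0 * X 1 : P2), X 0 ^ 2]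

lemma Dd_X0 : Dd (X 0) = X 0 * X 1 := by simp [Dd, mkDerivation_X]
lemma Dd_X1 : Dd (X 1) = X 0 ^ 2 := by simp [Dd, mkDerivation_X]

lemma Dd_natCast (m : ℕ) : Dd ((m : ℕ) : P2) = 0 := by
  have : ((m : ℕ) : P2) = algebraMap ℚ P2 (m : ℚ) := by push_cast; simp [algebraMap_eq]
  rw [this, Derivation.map_algebraMap]

lemma Dd_diff_zero : Dd (X 0 ^ 2 - X 1 ^ 2) = 0 := by
  rw [map_sub, Derivation.leibniz_pow, Derivation.leibniz_pow, Dd_X0, Dd_X1]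
  simp only [smul_eq_mul, nsmul_eq_mul]
  push_cast
  ring

lemma Dd_mon (a b : ℕ) (ha : 1 ≤ a) :
    Dd (X 0 ^ a * X 1 ^ b) = ((a : ℕ) : P2) * (X 0 ^ a * X 1 ^ (b+1))
      + ((b : ℕ) : P2) * (X 0 ^ (a+2) * X 1 ^ (b-1)) := by
  obtain ⟨a', rfl⟩ : ∃ a', a = a' + 1 := ⟨a - 1, by omega⟩
  rcases b with _ | b'
  · rw [pow_zero, mul_one, Derivation.leibniz_pow, Dd_X0]
    simp only [smul_eq_mul, nsmul_eq_mul, Nat.add_sub_cancel]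
    push_cast
    ring
  · rw [Derivation.leibniz, Derivation.leibniz_pow, Derivation.leibniz_pow, Dd_X0, Dd_X1]
    simp only [smul_eq_mul, nsmul_eq_mul, Nat.add_sub_cancel]
    push_cast
    ring

lemma Wb_norm (n N : ℕ) (hn : 1 ≤ n) (hN : (n + 1) / 2 ≤ N) :
    Wb n = ∑ k ∈ Finset.Icc 1 N,
      (extPeakNum n k : P2) * X 0 ^ (2 * k) * X 1 ^ (n + 1 - 2 * k) := by
  rw [Wb, if_neg (by omega)]
  refine Finset.sum_subset (Finset.Icc_subset_Icc_right hN) fun k hk hk' => ?_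
  rw [Finset.mem_Icc] at hk
  rw [Finset.mem_Icc] at hk'
  have : extPeakNum n k = 0 := extPeakNum_vanish n k (by omega)
  rw [this]
  simp

lemma Wb_succ (n : ℕ) (hn : 1 ≤ n) : Wb (n + 1) = Dd (Wb n) := by
  set M := (n + 1) / 2 with hM
  rw [Wb_norm n M hn le_rfl, map_sum]
  have hterm : ∀ k ∈ Finset.Icc 1 M,
      Dd ((extPeakNum n k : P2) * X 0 ^ (2 * k) * X 1 ^ (n + 1 - 2 * k))
      = ((2 * k * extPeakNum n k : ℕ) : P2) * X 0 ^ (2 * k) * X 1 ^ (n + 2 - 2 * k)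
        + (((n + 1 - 2 * k) * extPeakNum n k : ℕ) : P2) * X 0 ^ (2 * (k + 1))
            * X 1 ^ (n + 2 - 2 * (k + 1)) := by
    intro k hk
    rw [Finset.mem_Icc] at hk
    have h2k : 2 * k ≤ n + 1 := by omega
    rw [mul_assoc, Derivation.leibniz, Dd_natCast, smul_zero, add_zero, smul_eq_mul,
      Dd_mon (2 * k) (n + 1 - 2 * k) (by omega)]
    have e1 : n + 1 - 2 * k + 1 = n + 2 - 2 * k := by omega
    have e2 : n + 1 - 2 * k - 1 = n + 2 - 2 * (k + 1) := by omega
    have e3 : 2 * k + 2 = 2 * (k + 1) := by omega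
    rw [e1, e2, e3]
    push_cast
    ring
  rw [Finset.sum_congr rfl hterm, Finset.sum_add_distrib]
  -- reindex second sum
  have hre : ∑ k ∈ Finset.Icc 1 M,
        (((n + 1 - 2 * k) * extPeakNum n k : ℕ) : P2) * X 0 ^ (2 * (k + 1))
          * X 1 ^ (n + 2 - 2 * (k + 1))
      = ∑ j ∈ Finset.Icc 2 (M + 1),
        (((n + 3 - 2 * j) * extPeakNum n (j - 1) : ℕ) : P2) * X 0 ^ (2 * j)
          * X 1 ^ (n + 2 - 2 * j) := by
    rw [show Finset.Icc 2 (M+1) = (Finset.Icc 1 M).map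
          (addRightEmbedding 1) from by rw [Finset.map_add_right_Icc],
      Finset.sum_map]
    refine Finset.sum_congr rfl fun k hk => ?_
    rw [Finset.mem_Icc] at hk
    simp only [addRightEmbedding_apply]
    have e1 : n + 3 - 2 * (k + 1) = n + 1 - 2 * k := by omega
    have e2 : k + 1 - 1 = k := by omega
    rw [e1, e2]
  rw [hre]
  have hext1 : ∑ k ∈ Finset.Icc 1 M,
        ((2 * k * extPeakNum n k : ℕ) : P2) * X 0 ^ (2 * k) * X 1 ^ (n + 2 - 2 * k)
      = ∑ k ∈ Finset.Icc 1 (n + 2),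
        ((2 * k * extPeakNum n k : ℕ) : P2) * X 0 ^ (2 * k) * X 1 ^ (n + 2 - 2 * k) := by
    refine Finset.sum_subset (Finset.Icc_subset_Icc_right (by omega)) fun k hk hk' => ?_
    rw [Finset.mem_Icc] at hk hk'
    rw [extPeakNum_vanish n k (by omega)]
    simp
  have hext2 : ∑ j ∈ Finset.Icc 2 (M + 1),
        (((n + 3 - 2 * j) * extPeakNum n (j - 1) : ℕ) : P2) * X 0 ^ (2 * j)
          * X 1 ^ (n + 2 - 2 * j)
      = ∑ j ∈ Finset.Icc 1 (n + 2),
        (((n + 3 - 2 * j) * extPeakNum n (j - 1) : ℕ) : P2) * X 0 ^ (2 * j)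
          * X 1 ^ (n + 2 - 2 * j) := by
    refine Finset.sum_subset (fun j hj => ?_) fun j hj hj' => ?_
    · rw [Finset.mem_Icc] at hj ⊢; omega
    · rw [Finset.mem_Icc] at hj hj'
      rcases Nat.lt_or_ge j 2 with h | h
      · have hj1 : j = 1 := by omega
        rw [hj1]
        norm_num [extPeakNum_zero n hn]
      · rw [extPeakNum_vanish n (j - 1) (by omega)]
        simp
  rw [hext1, hext2, ← Finset.sum_add_distrib,
    Wb_norm (n + 1) (n + 2) (by omega) (by omega)]
  refine Finset.sum_congr rfl fun k hk => ?_
  rw [Finset.mem_Icc] at hk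
  rw [extPeakNum_rec n k hn (by omega)]
  push_cast
  ring

lemma Wb_iter (n : ℕ) : Wb n = Dd^[n] (X 1) := by
  induction n with
  | zero => simp [Wb]
  | succ n ih =>
    rcases Nat.eq_zero_or_pos n with rfl | hn
    · rw [show (0:ℕ) + 1 = 1 from rfl, Wb, if_neg one_ne_zero]
      norm_num
      rw [extPeakNum_one, Dd_X1]
      norm_num
    · rw [Wb_succ n hn, ih, Function.iterate_succ_apply']

lemma iter_add (m : ℕ) (p q : P2) : Dd^[m] (p + q) = Dd^[m] p + Dd^[m] q := by
  induction m generalizing p q with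
  | zero => rfl
  | succ m ih => rw [Function.iterate_succ_apply, map_add, ih, Function.iterate_succ_apply, Function.iterate_succ_apply]

lemma iter_diff (m : ℕ) (hm : 1 ≤ m) : Dd^[m] (X 0 ^ 2 - X 1 ^ 2) = 0 := by
  obtain ⟨m', rfl⟩ : ∃ m', m = m' + 1 := ⟨m - 1, by omega⟩
  rw [Function.iterate_succ_apply, Dd_diff_zero, Function.iterate_fixed (map_zero Dd)]


lemma iterLeibniz (a b : P2) (n : ℕ) :
    Dd^[n] (a * b) = ∑ k ∈ Finset.range (n + 1),
      (n.choose k) • (Dd^[k] a * Dd^[n - k] b) := by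
  induction n with
  | zero => simp
  | succ n ih =>
    rw [Function.iterate_succ_apply', ih, map_sum]
    have key : ∀ k ∈ Finset.range (n+1),
        Dd ((n.choose k) • (Dd^[k] a * Dd^[n-k] b))
        = (n.choose k) • (Dd^[k+1] a * Dd^[n-k] b)
          + (n.choose k) • (Dd^[k] a * Dd^[n+1-k] b) := by
      intro k hk
      rw [Finset.mem_range] at hk
      have h1 : n + 1 - k = (n - k) + 1 := by omega
      rw [map_nsmul, Derivation.leibniz, smul_eq_mul, smul_eq_mul, h1,
        Function.iterate_succ_apply', Function.iterate_succ_apply', ← smul_add]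
      ring_nf
    rw [Finset.sum_congr rfl key, Finset.sum_add_distrib]
    have hB : ∑ k ∈ Finset.range (n+1), (n.choose k) • (Dd^[k] a * Dd^[n+1-k] b)
        = (a * Dd^[n+1] b) + ∑ k ∈ Finset.range (n+1),
            (n.choose (k+1)) • (Dd^[k+1] a * Dd^[n-k] b) := by
      rw [Finset.sum_range_succ' (fun k => (n.choose k) • (Dd^[k] a * Dd^[n+1-k] b)) n]
      rw [Finset.sum_range_succ (fun k => (n.choose (k+1)) • (Dd^[k+1] a * Dd^[n-k] b)) n]
      simp only [Nat.choose_succ_self, zero_smul, add_zero, Nat.choose_zero_right, one_smul]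
      rw [add_comm]
      congr 1
      refine Finset.sum_congr rfl fun k hk => ?_
      rw [Finset.mem_range] at hk
      have e : n + 1 - (k+1) = n - k := by omega
      rw [e]
    rw [hB]
    have hsplit : ∑ k ∈ Finset.range (n+1+1), ((n+1).choose k) • (Dd^[k] a * Dd^[n+1-k] b)
        = (∑ k ∈ Finset.range (n+1), ((n+1).choose (k+1)) • (Dd^[k+1] a * Dd^[n-k] b))
          + a * Dd^[n+1] b := by
      rw [Finset.sum_range_succ' (fun k => ((n+1).choose k) • (Dd^[k] a * Dd^[n+1-k] b)) (n+1)]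
      simp only [Nat.choose_zero_right, one_smul, Nat.sub_zero, Function.iterate_zero_apply]
      congr 1
      refine Finset.sum_congr rfl fun k hk => ?_
      have e : n + 1 - (k+1) = n - k := by omega
      rw [e]
    rw [hsplit]
    have hmerge : ∀ k ∈ Finset.range (n+1), ((n+1).choose (k+1)) • ((Dd^[k+1] a * Dd^[n-k] b))
        = (n.choose k) • (Dd^[k+1] a * Dd^[n-k] b) + (n.choose (k+1)) • (Dd^[k+1] a * Dd^[n-k] b) := by
      intro k _
      rw [Nat.choose_succ_succ, add_smul]
    rw [Finset.sum_congr rfl hmerge, Finset.sum_add_distrib]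
    abel

/-- `W_{n+1}(x,y) = Σ_{k=0}^{n} C(n,k)·W_k(x,y)·W_{n−k}(x,y)` for `n ≥ 1`. -/
theorem stmt_5 (n : ℕ) (hn : 1 ≤ n) :
    Wb (n + 1) = ∑ k ∈ Finset.range (n + 1),
      (n.choose k : MvPolynomial (Fin 2) ℚ) * Wb k * Wb (n - k) := by
  have hR : ∑ k ∈ Finset.range (n + 1), (n.choose k : P2) * Wb k * Wb (n - k)
      = ∑ k ∈ Finset.range (n + 1), (n.choose k) • (Dd^[k] (X 1) * Dd^[n - k] (X 1)) := by
    refine Finset.sum_congr rfl fun k _ => ?_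
    rw [Wb_iter k, Wb_iter (n - k), nsmul_eq_mul, mul_assoc]
  rw [hR, ← iterLeibniz, Wb_iter, Function.iterate_succ_apply, Dd_X1]
  have hx : (X 0 : P2) ^ 2 = X 1 * X 1 + (X 0 ^ 2 - X 1 ^ 2) := by ring
  rw [hx, iter_add, iter_diff n hn, add_zero]
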